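/- Let (M, Φ, φ) be a quantum dynamical system with φ-adjoint Φ♯ and D_∞ as above. If B is any von Neumann subalgebra of M such that the restriction of Φ to B is a *-automorphism of B, then B ⊆ D_∞. Thus D_∞ is the maximal subalgebra on which Φ is reversible. -/

import Mathlib

open scoped ComplexOrder

section
variable {M : Type*} [NormedRing M] [StarRing M] [CStarRing M] [NormedAlgebra ℂ M]
  [StarModule ℂ M] [CompleteSpace M] [PartialOrder M] [StarOrderedRing M]

/-- The multiplicative domain of a linear map `Φ`. -/
def multDomain (Φ : Module.End ℂ M) : Set M :=
  {a : M | Φ (star a * a) = Φ (star a) * Φ a ∧ Φ (a * star a) = Φ a * Φ (star a)}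

/-- `φ` is a state: unital and positive. -/
def IsState (φ : M →ₗ[ℂ] ℂ) : Prop :=
  φ 1 = 1 ∧ ∀ a : M, 0 ≤ φ (star a * a)

/-- `φ` is faithful. -/
def IsFaithful (φ : M →ₗ[ℂ] ℂ) : Prop :=
  ∀ a : M, φ (star a * a) = 0 → a = 0

/-- `Φ` is a unital Schwartz map. -/
def IsSchwartz (Φ : Module.End ℂ M) : Prop :=
  Φ 1 = 1 ∧ ∀ a : M, star (Φ a) * Φ a ≤ Φ (star a * a)

/-- The `φ`-orthogonal complement of a set `R`. -/
def phiPerp (φ : M →ₗ[ℂ] ℂ) (R : Set M) : Set M :=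
  {a : M | ∀ x ∈ R, φ (star a * x) = 0}


/-- The two-sided family of dynamics: `Φ^k` for `k ≥ 0` and `(Φ♯)^|k|` for `k < 0`. -/
noncomputable def phiZ (Φ Ψ : Module.End ℂ M) : ℤ → Module.End ℂ M :=
  fun k => if 0 ≤ k then Φ ^ k.toNat else Ψ ^ (-k).toNat

/-- The algebra of effective observables `D_∞ = ⋂_{k ∈ ℤ} D_{Φ_k}`. -/
def Dinf (Φ Ψ : Module.End ℂ M) : Set M := ⋂ k : ℤ, multDomain (phiZ Φ Ψ k)



set_option linter.unusedSectionVars false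

private lemma phi_nonneg (φ : M →ₗ[ℂ] ℂ) (hφ : IsState φ) {p : M} (hp : 0 ≤ p) : 0 ≤ φ p := by
  rw [StarOrderedRing.nonneg_iff] at hp
  induction hp using AddSubmonoid.closure_induction with
  | mem x hx => obtain ⟨s, rfl⟩ := hx; exact hφ.2 s
  | zero => simp
  | add a b _ _ ha hb => rw [map_add]; exact add_nonneg ha hb

private lemma aux_zero (A C : ℂ) (hC : 0 ≤ C)
    (h : ∀ ε : ℝ, 0 ≤ (ε : ℂ) * A + (ε : ℂ) ^ 2 * C) : A = 0 := by
  rw [Complex.le_def] at hC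
  have hre : ∀ ε : ℝ, 0 ≤ ε * A.re + ε ^ 2 * C.re := by
    intro ε
    have h1 := (Complex.le_def.mp (h ε)).1
    simpa [Complex.add_re, Complex.mul_re, Complex.ofReal_re, Complex.ofReal_im, pow_two] using h1
  have him : A.im = 0 := by
    have h1 := (Complex.le_def.mp (h 1)).2
    simp [Complex.add_im, Complex.mul_im, ← hC.2] at h1
    linarith
  have hC1 : 0 ≤ C.re := by simpa using hC.1
  have hCpos : (0:ℝ) < C.re + 1 := by linarith
  have hA : A.re = 0 := by
    have h0 := hre (-(A.re) / (C.re + 1))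
    have h2 : (-(A.re) / (C.re + 1)) * A.re + (-(A.re) / (C.re + 1)) ^ 2 * C.re
        = -(A.re ^ 2) / (C.re + 1) ^ 2 := by
      field_simp
      ring
    rw [h2] at h0
    have h3 : 0 ≤ -(A.re ^ 2) := by
      have h4 := mul_nonneg h0 (le_of_lt (pow_pos hCpos 2))
      rwa [div_mul_cancel₀] at h4
      exact ne_of_gt (pow_pos hCpos 2)
    have h5 : A.re ^ 2 = 0 := le_antisymm (by linarith) (sq_nonneg _)
    exact pow_eq_zero_iff (by norm_num) |>.mp h5
  exact Complex.ext hA him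

private lemma sesq_cs (Φ : Module.End ℂ M) (hΦ : IsSchwartz Φ) (φ : M →ₗ[ℂ] ℂ) (hφ : IsState φ)
    (x y : M) (hx : φ (Φ (star x * x)) = φ (star (Φ x) * Φ x)) :
    φ (Φ (star x * y)) = φ (star (Φ x) * Φ y) := by
  set f : M → M → ℂ := fun u v => φ (Φ (star u * v)) - φ (star (Φ u) * Φ v) with hf
  have hpos : ∀ z, 0 ≤ f z z := by
    intro z
    have h1 := phi_nonneg φ hφ (sub_nonneg.2 (hΦ.2 z))
    rw [map_sub] at h1
    simpa [hf] using h1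
  have prod : ∀ (a b c d : M) (s t : ℂ),
      (a + s • b) * (c + t • d) = a * c + t • (a * d) + s • (b * c) + (s * t) • (b * d) := by
    intros a b c d s t
    simp only [mul_add, add_mul, smul_mul_assoc, mul_smul_comm, smul_smul]
    module
  have expand : ∀ t : ℂ, f (x + t • y) (x + t • y)
      = f x x + t * f x y + star t * f y x + (t * star t) * f y y := by
    intro t
    have e1 : (star (x + t • y)) = star x + star t • star y := by
      simp [star_smul]
    have e2 : Φ (x + t • y) = Φ x + t • Φ y := by simp
    have e3 : star (Φ x + t • Φ y) = star (Φ x) + star t • star (Φ y) := by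
      simp [star_smul]
    simp only [hf, e1, e2, e3, prod, map_add, map_smul, smul_eq_mul]
    ring
  have hxx : f x x = 0 := by simp [hf, hx]
  have hyyC : 0 ≤ f y y := hpos y
  have hA1 : f x y + f y x = 0 := by
    apply aux_zero _ _ hyyC
    intro ε
    have h1 := hpos (x + (ε : ℂ) • y)
    rw [expand] at h1
    have hsε : star (ε : ℂ) = (ε : ℂ) := by
      simp [Complex.star_def, Complex.conj_ofReal]
    rw [hsε, hxx] at h1
    convert h1 using 1
    ring
  have hA2 : Complex.I * (f x y - f y x) = 0 := by
    apply aux_zero _ _ hyyC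
    intro ε
    have h1 := hpos (x + ((ε : ℂ) * Complex.I) • y)
    rw [expand] at h1
    have hsε : star ((ε : ℂ) * Complex.I) = -((ε : ℂ) * Complex.I) := by
      simp [Complex.star_def, Complex.conj_ofReal, mul_comm]
    rw [hsε, hxx] at h1
    convert h1 using 1
    ring_nf
    rw [Complex.I_sq]
    ring
  have h2 : f x y - f y x = 0 := by
    rcases mul_eq_zero.mp hA2 with h | h
    · exact absurd h Complex.I_ne_zero
    · exact h
  have hfin : f x y = 0 := by linear_combination (hA1 + h2) / 2
  rw [hf] at hfin
  exact sub_eq_zero.mp hfin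

/-- any von Neumann subalgebra `B` on which `Φ` restricts to a
*-automorphism is contained in `D_∞`; thus `D_∞` is maximal. -/
theorem Dinf_maximal
    (Φ Ψ : Module.End ℂ M) (hΦ : IsSchwartz Φ) (hΨ : IsSchwartz Ψ)
    (φ : M →ₗ[ℂ] ℂ) (hφ : IsState φ) (hfaith : IsFaithful φ)
    (hstat : ∀ a : M, φ (Φ a) = φ a)
    (hadj : ∀ a b : M, φ (b * Φ a) = φ (Ψ b * a))
    (B : StarSubalgebra ℂ M)
    (hmaps : ∀ b ∈ B, Φ b ∈ B)
    (hmulB : ∀ b ∈ B, ∀ c ∈ B, Φ (b * c) = Φ b * Φ c)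
    (hstarB : ∀ b ∈ B, Φ (star b) = star (Φ b))
    (hsurjB : ∀ b ∈ B, ∃ c ∈ B, Φ c = b)
    (hinjB : Set.InjOn Φ (B : Set M)) :
    (B : Set M) ⊆ Dinf Φ Ψ := by
  have key : ∀ c ∈ B, ∀ a : M, φ (Φ c * Φ a) = φ (c * a) := by
    intro c hc a
    have hsc : star c ∈ B := star_mem hc
    have hx : φ (Φ (star (star c) * star c)) = φ (star (Φ (star c)) * Φ (star c)) := by
      rw [star_star, hstarB c hc, star_star, hmulB c hc (star c) hsc, hstarB c hc]
    have h1 := sesq_cs Φ hΦ φ hφ (star c) a hx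
    rw [star_star, hstarB c hc, star_star] at h1
    rw [← h1, hstat]
  have hPsi : ∀ b ∈ B, Ψ b ∈ B ∧ Φ (Ψ b) = b := by
    intro b hb
    obtain ⟨c, hc, hΦc⟩ := hsurjB b hb
    have hzero : ∀ a : M, φ ((Ψ b - c) * a) = 0 := by
      intro a
      have h1 : φ (Ψ b * a) = φ (c * a) := by
        rw [← hadj a b, ← hΦc, key c hc a]
      rw [sub_mul, map_sub, h1, sub_self]
    have hx0 : Ψ b - c = 0 := by
      have h2 := hzero (star (Ψ b - c))
      have h3 : star (Ψ b - c) = 0 := hfaith _ (by rw [star_star]; exact h2)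
      exact star_eq_zero.mp h3
    have hbc : Ψ b = c := by rwa [sub_eq_zero] at hx0
    rw [hbc]; exact ⟨hc, hΦc⟩
  have hmapsΨ : ∀ b ∈ B, Ψ b ∈ B := fun b hb => (hPsi b hb).1
  have hPhiPsi : ∀ b ∈ B, Φ (Ψ b) = b := fun b hb => (hPsi b hb).2
  have hmulΨ : ∀ b ∈ B, ∀ c ∈ B, Ψ (b * c) = Ψ b * Ψ c := by
    intro b hb c hc
    have h1 : Φ (Ψ (b * c)) = Φ (Ψ b * Ψ c) := by
      rw [hPhiPsi _ (mul_mem hb hc), hmulB _ (hmapsΨ b hb) _ (hmapsΨ c hc),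
        hPhiPsi b hb, hPhiPsi c hc]
    exact hinjB (hmapsΨ _ (mul_mem hb hc)) (mul_mem (hmapsΨ b hb) (hmapsΨ c hc)) h1
  have powP : ∀ (T : Module.End ℂ M), (∀ b ∈ B, T b ∈ B) →
      (∀ b ∈ B, ∀ c ∈ B, T (b * c) = T b * T c) →
      ∀ n : ℕ, (∀ b ∈ B, (T ^ n) b ∈ B) ∧
        (∀ b ∈ B, ∀ c ∈ B, (T ^ n) (b * c) = (T ^ n) b * (T ^ n) c) := by
    intro T hm hmul n
    induction n with
    | zero => simp
    | succ n ih =>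
      constructor
      · intro b hb
        rw [pow_succ, Module.End.mul_apply]
        exact ih.1 _ (hm b hb)
      · intro b hb c hc
        rw [pow_succ, Module.End.mul_apply, Module.End.mul_apply, Module.End.mul_apply,
          hmul b hb c hc]
        exact ih.2 _ (hm b hb) _ (hm c hc)
  intro b hb
  rw [Dinf, Set.mem_iInter]
  intro k
  rcases le_or_gt 0 k with hk | hk
  · have hP := powP Φ hmaps hmulB k.toNat
    have hz : phiZ Φ Ψ k = Φ ^ k.toNat := if_pos hk
    rw [hz]
    exact ⟨hP.2 _ (star_mem hb) _ hb, hP.2 _ hb _ (star_mem hb)⟩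
  · have hP := powP Ψ hmapsΨ hmulΨ (-k).toNat
    have hz : phiZ Φ Ψ k = Ψ ^ (-k).toNat := if_neg (not_le.mpr hk)
    rw [hz]
    exact ⟨hP.2 _ (star_mem hb) _ hb, hP.2 _ hb _ (star_mem hb)⟩


end
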